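/- arXiv:2006.15077 — 2 statements merged into one kernel-verified Lean document; each statement's English description precedes it below -/
import Mathlib

section
/- Let n0, n1 ≥ 1 be natural numbers, n := n0 + n1, and let t ≥ 2 be an even natural number. Then the number of binary sequences x in B_{n0,n1} with τ(x) = t satisfies 2·n0·n1·|{x ∈ B_{n0,n1} : τ(x) = t}| = (n·t − t²) · C(n0, t/2) · C(n1, t/2), where C(a,b) denotes the binomial coefficient. -/
/-- The number of jumps `τ(x) = |{i ∈ [n-1] : x_i ≠ x_{i+1}}|` of a binary sequence
`x ∈ {0,1}^n`. -/
def tau {n : ℕ} (x : Fin n → Bool) : ℕ :=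
  (Finset.univ.filter (fun i : Fin n =>
    ∃ h : (i : ℕ) + 1 < n, x i ≠ x ⟨(i : ℕ) + 1, h⟩)).card

/-- `B_{n0,n1}`, the set of binary sequences of length `n0 + n1` with exactly
`n0` zeros and `n1` ones. -/
def Bseq (n0 n1 : ℕ) : Finset (Fin (n0 + n1) → Bool) :=
  Finset.univ.filter (fun x =>
    (Finset.univ.filter (fun i => x i = false)).card = n0 ∧
    (Finset.univ.filter (fun i => x i = true)).card = n1)

def Zc {m : ℕ} (x : Fin m → Bool) : ℕ := (Finset.univ.filter (fun i => x i = false)).card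
def Oc {m : ℕ} (x : Fin m → Bool) : ℕ := (Finset.univ.filter (fun i => x i = true)).card

def cnt (m n0 n1 t : ℕ) (b : Bool) : ℕ :=
  ((Finset.univ : Finset (Fin m → Bool)).filter (fun x =>
    Zc x = n0 ∧ Oc x = n1 ∧ tau x = t ∧ ∀ h : 0 < m, x ⟨0, h⟩ = b)).card

lemma Zc_add_Oc {m : ℕ} (x : Fin m → Bool) : Zc x + Oc x = m := by
  unfold Zc Oc
  have h2 : (Finset.univ.filter (fun i => x i = true)).card
      = (Finset.univ.filter (fun i => ¬ (x i = false))).card := by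
    congr 1
    apply Finset.filter_congr
    intro i _
    simp
  rw [h2, Finset.card_filter_add_card_filter_not, Finset.card_univ, Fintype.card_fin]

lemma tau_zero_one {m : ℕ} (hm : m ≤ 1) (x : Fin m → Bool) : tau x = 0 := by
  unfold tau
  rw [Finset.card_eq_zero, Finset.filter_eq_empty_iff]
  rintro i -
  rintro ⟨h, -⟩
  omega

lemma tau_cons {k : ℕ} (x : Fin (k + 2) → Bool) :
    tau x = (if x 0 = x 1 then 0 else 1) + tau (Fin.tail x) := by
  unfold tau
  rw [Finset.card_filter, Finset.card_filter, Fin.sum_univ_succ]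
  congr 1
  · have h1 : ∀ h : ((0 : Fin (k+2)) : ℕ) + 1 < k + 2, (⟨((0 : Fin (k+2)) : ℕ) + 1, h⟩ : Fin (k+2)) = 1 := by
      intro h; ext; simp
    have hiff : (∃ h : ((0 : Fin (k+2)) : ℕ) + 1 < k + 2, x 0 ≠ x ⟨((0 : Fin (k+2)) : ℕ) + 1, h⟩)
        ↔ ¬ (x 0 = x 1) := by
      constructor
      · rintro ⟨h, hx⟩; rwa [h1 h] at hx
      · intro h
        refine ⟨by simp, ?_⟩
        rw [h1]; exact h
    rw [if_congr hiff rfl rfl]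
    by_cases h : x 0 = x 1 <;> simp [h]
  · apply Finset.sum_congr rfl
    intro i _
    have hiff : (∃ h : ((i.succ : Fin (k+2)) : ℕ) + 1 < k + 2, x i.succ ≠ x ⟨((i.succ : Fin (k+2)) : ℕ) + 1, h⟩)
        ↔ (∃ h : (i : ℕ) + 1 < k + 1, Fin.tail x i ≠ Fin.tail x ⟨(i : ℕ) + 1, h⟩) := by
      constructor
      · rintro ⟨h, hx⟩
        exact ⟨by simpa using h, by simpa [Fin.tail, Fin.succ] using hx⟩
      · rintro ⟨h, hx⟩
        exact ⟨by simpa using h, by simpa [Fin.tail, Fin.succ] using hx⟩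
    rw [if_congr hiff rfl rfl]

lemma Zc_cons {k : ℕ} (b : Bool) (y : Fin k → Bool) :
    Zc (Fin.cons b y) = (if b = false then 1 else 0) + Zc y := by
  unfold Zc
  rw [Finset.card_filter, Finset.card_filter, Fin.sum_univ_succ]
  simp

lemma Oc_cons {k : ℕ} (b : Bool) (y : Fin k → Bool) :
    Oc (Fin.cons b y) = (if b = true then 1 else 0) + Oc y := by
  unfold Oc
  rw [Finset.card_filter, Finset.card_filter, Fin.sum_univ_succ]
  simp

lemma start_iff {m : ℕ} (x : Fin (m+1) → Bool) (b : Bool) :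
    (∀ h : 0 < m + 1, x ⟨0, h⟩ = b) ↔ x 0 = b := by
  constructor
  · intro h; exact h (by omega)
  · intro h _; exact h

lemma tau_neg {m : ℕ} (x : Fin m → Bool) : tau (fun i => !(x i)) = tau x := by
  unfold tau
  congr 1
  apply Finset.filter_congr
  intro i _
  simp

lemma Zc_neg {m : ℕ} (x : Fin m → Bool) : Zc (fun i => !(x i)) = Oc x := by
  unfold Zc Oc; congr 1; apply Finset.filter_congr; intro i _; simp

lemma Oc_neg {m : ℕ} (x : Fin m → Bool) : Oc (fun i => !(x i)) = Zc x := by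
  unfold Zc Oc; congr 1; apply Finset.filter_congr; intro i _; simp

lemma cnt_symm (m n0 n1 t : ℕ) (b : Bool) : cnt m n0 n1 t b = cnt m n1 n0 t (!b) := by
  unfold cnt
  apply Finset.card_bij' (fun x _ => fun i => !(x i)) (fun y _ => fun i => !(y i))
  · intro x hx
    rw [Finset.mem_filter] at hx ⊢
    obtain ⟨-, hZ, hO, hT, hS⟩ := hx
    refine ⟨Finset.mem_univ _, ?_, ?_, ?_, ?_⟩
    · rw [Zc_neg, hO]
    · rw [Oc_neg, hZ]
    · rw [tau_neg, hT]
    · intro h; rw [show (fun i => !x i) ⟨0,h⟩ = !(x ⟨0,h⟩) from rfl, hS h]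
  · intro y hy
    rw [Finset.mem_filter] at hy ⊢
    obtain ⟨-, hZ, hO, hT, hS⟩ := hy
    refine ⟨Finset.mem_univ _, ?_, ?_, ?_, ?_⟩
    · rw [Zc_neg, hO]
    · rw [Oc_neg, hZ]
    · rw [tau_neg, hT]
    · intro h; rw [show (fun i => !y i) ⟨0,h⟩ = !(y ⟨0,h⟩) from rfl, hS h]; simp
  · intro x _; funext i; simp
  · intro x _; funext i; simp

lemma cnt_eq_zero {m n0 n1 t : ℕ} {b : Bool} (h : n0 + n1 ≠ m) : cnt m n0 n1 t b = 0 := by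
  unfold cnt
  rw [Finset.card_eq_zero, Finset.filter_eq_empty_iff]
  rintro x - ⟨hZ, hO, -, -⟩
  exact h (by rw [← hZ, ← hO]; exact Zc_add_Oc x)

lemma one_eq_succ_zero {k : ℕ} : (1 : Fin (k+2)) = (0 : Fin (k+1)).succ := by
  ext; simp

lemma bij_fst (k n0 n1 t : ℕ) (hn0 : 1 ≤ n0) (c : Bool) (t' : ℕ)
    (htc : if c = false then t' = t else (1 ≤ t ∧ t' = t - 1)) :
    ((Finset.univ : Finset (Fin (k+2) → Bool)).filter (fun x =>
      (Zc x = n0 ∧ Oc x = n1 ∧ tau x = t ∧ ∀ h : 0 < k+2, x ⟨0, h⟩ = false) ∧ x 1 = c)).card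
    = cnt (k+1) (n0-1) n1 t' c := by
  unfold cnt
  refine Finset.card_bij' (fun x _ => Fin.tail x) (fun y _ => Fin.cons false y) ?hi ?hj ?left ?right
  case hi =>
    intro x hx
    rw [Finset.mem_filter] at hx
    obtain ⟨-, ⟨hZ, hO, hT, hS⟩, h1⟩ := hx
    have hx0 : x 0 = false := by have h' := hS (by omega); simpa using h'
    have hc : Fin.cons (x 0) (Fin.tail x) = x := Fin.cons_self_tail x
    have hZ' : Zc x = 1 + Zc (Fin.tail x) := by
      conv_lhs => rw [← hc]
      rw [Zc_cons, hx0]; simp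
    have hO' : Oc x = Oc (Fin.tail x) := by
      conv_lhs => rw [← hc]
      rw [Oc_cons, hx0]; simp
    have hT' := tau_cons x
    rw [hx0, h1] at hT'
    show Fin.tail x ∈ _
    refine Finset.mem_filter.2 ⟨Finset.mem_univ _, by omega, by omega, ?_, ?_⟩
    · by_cases hc : c = false
      · rw [hc] at hT' htc; simp at hT' htc; omega
      · have hc' : c = true := by simpa using hc
        rw [hc'] at hT' htc; simp at hT' htc; omega
    · intro h
      have e : (⟨0, h⟩ : Fin (k+1)).succ = 1 := by ext; simp
      show x ((⟨0, h⟩ : Fin (k+1)).succ) = c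
      rw [e]; exact h1
  case hj =>
    intro y hy
    rw [Finset.mem_filter] at hy
    obtain ⟨-, hZ, hO, hT, hS⟩ := hy
    have hy0 : y 0 = c := by have h' := hS (by omega); simpa using h'
    have e1 : (Fin.cons false y : Fin (k+2) → Bool) 1 = y 0 := by
      rw [one_eq_succ_zero, Fin.cons_succ]
    show (Fin.cons false y : Fin (k+2) → Bool) ∈ _
    refine Finset.mem_filter.2 ⟨Finset.mem_univ _, ⟨?_, ?_, ?_, ?_⟩, ?_⟩
    · have hzc := Zc_cons false y
      simp at hzc
      omega
    · have hoc := Oc_cons false y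
      simp at hoc
      omega
    · rw [tau_cons, Fin.tail_cons, e1, Fin.cons_zero, hy0, hT]
      by_cases hc : c = false
      · rw [hc] at htc ⊢; simp at htc ⊢; omega
      · have hc' : c = true := by simpa using hc
        rw [hc'] at htc ⊢; simp at htc ⊢; omega
    · intro h
      show (Fin.cons false y : Fin (k+2) → Bool) ⟨0, h⟩ = false
      have e0 : (⟨0, h⟩ : Fin (k+2)) = 0 := by ext; simp
      rw [e0, Fin.cons_zero]
    · rw [e1]; exact hy0
  case left =>
    intro x hx
    rw [Finset.mem_filter] at hx
    obtain ⟨-, ⟨-, -, -, hS⟩, -⟩ := hx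
    have hx0 : x 0 = false := by have h' := hS (by omega); simpa using h'
    show Fin.cons false (Fin.tail x) = x
    have hc := Fin.cons_self_tail x
    rw [hx0] at hc; exact hc
  case right =>
    intro y _
    funext i
    exact @Fin.cons_succ (k+1) (fun _ => Bool) false y i

lemma cnt_rec (k n0 n1 t : ℕ) (hn0 : 1 ≤ n0) (ht : 1 ≤ t) :
    cnt (k+2) n0 n1 t false = cnt (k+1) (n0-1) n1 t false + cnt (k+1) (n0-1) n1 (t-1) true := by
  rw [← bij_fst k n0 n1 t hn0 false t (by simp),
      ← bij_fst k n0 n1 t hn0 true (t-1) (by simp; omega)]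
  unfold cnt
  rw [← Finset.card_filter_add_card_filter_not
    (p := fun x : Fin (k+2) → Bool => x 1 = false),
    Finset.filter_filter, Finset.filter_filter]
  congr 2
  apply Finset.filter_congr
  intro x _
  simp only [Bool.not_eq_false, Finset.mem_univ]

lemma cnt_rec0 (k n0 n1 : ℕ) (hn0 : 1 ≤ n0) :
    cnt (k+2) n0 n1 0 false = cnt (k+1) (n0-1) n1 0 false := by
  rw [← bij_fst k n0 n1 0 hn0 false 0 (by simp)]
  unfold cnt
  congr 1
  apply Finset.filter_congr
  intro x _
  simp only [Finset.mem_univ, and_iff_left_iff_imp, iff_self_and]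
  rintro ⟨hZ, hO, hT, hS⟩
  have hx0 : x 0 = false := by have h' := hS (by omega); simpa using h'
  have hT' := tau_cons x
  rw [hx0, hT] at hT'
  by_cases h : x 1 = false
  · exact h
  · exfalso
    have h' : x 1 = true := by
      cases hxx : x 1
      · exact absurd hxx h
      · rfl
    rw [h'] at hT'
    simp at hT'
    omega

def f0 (n0 n1 t : ℕ) : ℕ :=
  if t = 0 then (if n1 = 0 then 1 else 0)
  else if n0 = 0 ∨ n1 = 0 then 0
  else Nat.choose (n0-1) (t/2) * Nat.choose (n1-1) ((t-1)/2)

lemma f0_rec (n0 n1 t : ℕ) (hn0 : 1 ≤ n0) (ht : 1 ≤ t) (hm : 2 ≤ n0 + n1) :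
    f0 n0 n1 t = f0 (n0-1) n1 t + f0 n1 (n0-1) (t-1) := by
  unfold f0
  rcases Nat.eq_zero_or_pos n1 with h1|h1
  · split_ifs <;> omega
  rcases eq_or_lt_of_le ht with ht1|ht2
  · rw [← ht1]
    norm_num
    split_ifs <;> omega
  · -- 2 ≤ t
    rcases Nat.lt_or_ge n0 2 with hn01|hn02
    · have hn0e : n0 = 1 := by omega
      subst hn0e
      have hz : Nat.choose (1-1) (t/2) = 0 := Nat.choose_eq_zero_of_lt (by omega)
      split_ifs <;> simp_all <;> omega
    · -- main case
      obtain ⟨u, hu⟩ : ∃ u, t = u + 2 := ⟨t - 2, by omega⟩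
      obtain ⟨v, hv⟩ : ∃ v, n0 = v + 2 := ⟨n0 - 2, by omega⟩
      subst hu hv
      have e1 : (v + 2 - 1) = v + 1 := by omega
      have e3 : (u + 2) / 2 = u / 2 + 1 := by omega
      have e5 : (u + 2 - 1 - 1) / 2 = u / 2 := by omega
      have e4 : (u + 2 - 1) / 2 = (u + 1) / 2 := by omega
      have e6 : ¬ (u + 2 = 0) := by omega
      have e7 : ¬ (u + 2 - 1 = 0) := by omega
      have e8 : ¬ (v + 2 = 0 ∨ n1 = 0) := by omega
      have e9 : ¬ (v + 2 - 1 = 0 ∨ n1 = 0) := by omega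
      have e10 : ¬ (n1 = 0 ∨ v + 2 - 1 = 0) := by omega
      rw [if_neg e6, if_neg e6, if_neg e7, if_neg e8, if_neg e9, if_neg e10]
      rw [e3, e5, e4, e1]
      have e11 : (v + 1 - 1) = v := by omega
      rw [e11]
      rw [Nat.choose_succ_succ]
      ring

lemma cnt_len0 (n0 n1 t : ℕ) (b : Bool) :
    cnt 0 n0 n1 t b = if n0 = 0 ∧ n1 = 0 ∧ t = 0 then 1 else 0 := by
  have hZ : ∀ x : Fin 0 → Bool, Zc x = 0 := fun x => by simp [Zc]
  have hO : ∀ x : Fin 0 → Bool, Oc x = 0 := fun x => by simp [Oc]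
  have hτ : ∀ x : Fin 0 → Bool, tau x = 0 := fun x => tau_zero_one (by omega) x
  unfold cnt
  by_cases h : n0 = 0 ∧ n1 = 0 ∧ t = 0
  · rw [if_pos h]
    rw [Finset.filter_true_of_mem, Finset.card_univ]
    · simp
    · intro x _
      exact ⟨by rw [hZ, h.1], by rw [hO, h.2.1], by rw [hτ, h.2.2], fun hc => by omega⟩
  · rw [if_neg h]
    rw [Finset.card_eq_zero, Finset.filter_eq_empty_iff]
    rintro x - ⟨a, b', c, -⟩
    exact h ⟨by rw [← a, hZ], by rw [← b', hO], by rw [← c, hτ]⟩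

lemma cnt_len1 (n0 n1 t : ℕ) :
    cnt 1 n0 n1 t false = if n0 = 1 ∧ n1 = 0 ∧ t = 0 then 1 else 0 := by
  have key : ∀ x : Fin 1 → Bool, x 0 = false → Zc x = 1 ∧ Oc x = 0 := by
    intro x hx0
    constructor
    · simp [Zc, Finset.univ_unique, Finset.filter_singleton, hx0]
    · simp [Oc, Finset.univ_unique, Finset.filter_singleton, hx0]
  have hτ : ∀ x : Fin 1 → Bool, tau x = 0 := fun x => tau_zero_one (by omega) x
  unfold cnt
  by_cases h : n0 = 1 ∧ n1 = 0 ∧ t = 0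
  · rw [if_pos h]
    rw [Finset.card_eq_one]
    refine ⟨fun _ => false, ?_⟩
    ext x
    simp only [Finset.mem_filter, Finset.mem_univ, true_and, Finset.mem_singleton]
    constructor
    · rintro ⟨-, -, -, hS⟩
      have hx0 : x 0 = false := by have := hS (by omega); simpa using this
      funext i
      have : i = 0 := Subsingleton.elim i 0
      rw [this, hx0]
    · rintro rfl
      refine ⟨?_, ?_, ?_, ?_⟩
      · rw [(key _ rfl).1, h.1]
      · rw [(key _ rfl).2, h.2.1]
      · rw [hτ, h.2.2]
      · intro _; rfl
  · rw [if_neg h]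
    rw [Finset.card_eq_zero, Finset.filter_eq_empty_iff]
    rintro x - ⟨a, b', c, hS⟩
    have hx0 : x 0 = false := by have := hS (by omega); simpa using this
    exact h ⟨by rw [← a, (key x hx0).1], by rw [← b', (key x hx0).2], by rw [← c, hτ]⟩

lemma master : ∀ m n0 n1 t : ℕ, cnt m n0 n1 t false = if n0 + n1 = m then f0 n0 n1 t else 0 := by
  intro m
  induction m with
  | zero =>
    intro n0 n1 t
    rw [cnt_len0]
    unfold f0
    split_ifs <;> omega
  | succ k ih =>
    intro n0 n1 t
    match k, ih with
    | 0, _ =>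
      rw [cnt_len1]
      unfold f0
      split_ifs <;> omega
    | (k' + 1), ih =>
      by_cases hsum : n0 + n1 = k' + 2
      · rcases Nat.eq_zero_or_pos n0 with hz|hp
        · rw [if_pos hsum]
          subst hz
          have hc : cnt (k'+2) 0 n1 t false = 0 := by
            unfold cnt
            rw [Finset.card_eq_zero, Finset.filter_eq_empty_iff]
            rintro x - ⟨hZ, hO, hT, hS⟩
            have hx0 : x 0 = false := by have := hS (by omega); simpa using this
            have hmem : (0 : Fin (k'+2)) ∈ Finset.univ.filter (fun i => x i = false) := by
              simp [hx0]
            unfold Zc at hZ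
            rw [Finset.card_eq_zero] at hZ
            rw [hZ] at hmem
            exact absurd hmem (Finset.notMem_empty _)
          rw [hc]
          unfold f0
          split_ifs <;> omega
        · by_cases ht0 : t = 0
          · subst ht0
            rw [cnt_rec0 k' n0 n1 hp, ih, if_pos (by omega : (n0-1) + n1 = k' + 1),
              if_pos hsum]
            unfold f0
            simp
          · rw [cnt_rec k' n0 n1 t hp (by omega),
              cnt_symm (k'+1) (n0-1) n1 (t-1) true]
            simp only [Bool.not_true]
            rw [ih, ih,
              if_pos (by omega : (n0-1) + n1 = k' + 1),
              if_pos (by omega : n1 + (n0-1) = k' + 1), if_pos hsum]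
            exact (f0_rec n0 n1 t hp (by omega) (by omega)).symm
      · rw [cnt_eq_zero hsum, if_neg hsum]

lemma id1 (n s : ℕ) (hn : 1 ≤ n) : n * Nat.choose (n-1) s = (n - s) * Nat.choose n s := by
  obtain ⟨m, rfl⟩ : ∃ m, n = m + 1 := ⟨n - 1, by omega⟩
  have h1 : (m + 1) * Nat.choose m s = Nat.choose (m+1) (s+1) * (s+1) := Nat.add_one_mul_choose_eq m s
  have h2 : Nat.choose (m+1) (s+1) * (s+1) = Nat.choose (m+1) s * ((m+1) - s) :=
    Nat.choose_succ_right_eq (m+1) s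
  simp only [Nat.add_sub_cancel]
  rw [h1, h2]; ring

lemma id2 (n s : ℕ) (hn : 1 ≤ n) (hs : 1 ≤ s) :
    n * Nat.choose (n-1) (s-1) = s * Nat.choose n s := by
  obtain ⟨m, rfl⟩ : ∃ m, n = m + 1 := ⟨n - 1, by omega⟩
  obtain ⟨r, rfl⟩ : ∃ r, s = r + 1 := ⟨s - 1, by omega⟩
  simp only [Nat.add_sub_cancel]
  rw [Nat.add_one_mul_choose_eq m r]; ring

lemma arith (n0 n1 s : ℕ) (h0 : 1 ≤ n0) (h1 : 1 ≤ n1) (hs : 1 ≤ s) :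
    2 * n0 * n1 * (Nat.choose (n0-1) s * Nat.choose (n1-1) (s-1)
        + Nat.choose (n1-1) s * Nat.choose (n0-1) (s-1)) =
      ((n0 + n1) * (2*s) - (2*s)^2) * Nat.choose n0 s * Nat.choose n1 s := by
  rcases Nat.lt_or_ge n0 s with hlt|hge0
  · have z1 : Nat.choose n0 s = 0 := Nat.choose_eq_zero_of_lt hlt
    have z2 : Nat.choose (n0-1) s = 0 := Nat.choose_eq_zero_of_lt (by omega)
    have z3 : Nat.choose (n0-1) (s-1) = 0 := Nat.choose_eq_zero_of_lt (by omega)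
    rw [z1, z2, z3]; ring
  rcases Nat.lt_or_ge n1 s with hlt|hge1
  · have z1 : Nat.choose n1 s = 0 := Nat.choose_eq_zero_of_lt hlt
    have z2 : Nat.choose (n1-1) s = 0 := Nat.choose_eq_zero_of_lt (by omega)
    have z3 : Nat.choose (n1-1) (s-1) = 0 := Nat.choose_eq_zero_of_lt (by omega)
    rw [z1, z2, z3]; ring
  · obtain ⟨a, rfl⟩ : ∃ a, n0 = s + a := ⟨n0 - s, by omega⟩
    obtain ⟨b, rfl⟩ : ∃ b, n1 = s + b := ⟨n1 - s, by omega⟩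
    have hsub : ((s + a) + (s + b)) * (2*s) - (2*s)^2 = 2*s*(a+b) := by
      have h : ((s + a) + (s + b)) * (2*s) = (2*s)^2 + 2*s*(a+b) := by ring
      rw [h, Nat.add_sub_cancel_left]
    rw [hsub]
    have i1 : (s+a) * Nat.choose (s+a-1) s = a * Nat.choose (s+a) s := by
      rw [id1 (s+a) s (by omega)]; congr 1; omega
    have i2 : (s+a) * Nat.choose (s+a-1) (s-1) = s * Nat.choose (s+a) s :=
      id2 (s+a) s (by omega) hs
    have i3 : (s+b) * Nat.choose (s+b-1) s = b * Nat.choose (s+b) s := by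
      rw [id1 (s+b) s (by omega)]; congr 1; omega
    have i4 : (s+b) * Nat.choose (s+b-1) (s-1) = s * Nat.choose (s+b) s :=
      id2 (s+b) s (by omega) hs
    calc 2 * (s+a) * (s+b) * (Nat.choose (s+a-1) s * Nat.choose (s+b-1) (s-1)
            + Nat.choose (s+b-1) s * Nat.choose (s+a-1) (s-1))
        = 2 * (((s+a) * Nat.choose (s+a-1) s) * ((s+b) * Nat.choose (s+b-1) (s-1))
            + ((s+b) * Nat.choose (s+b-1) s) * ((s+a) * Nat.choose (s+a-1) (s-1))) := by ring
      _ = 2 * ((a * Nat.choose (s+a) s) * (s * Nat.choose (s+b) s)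
            + (b * Nat.choose (s+b) s) * (s * Nat.choose (s+a) s)) := by rw [i1, i2, i3, i4]
      _ = 2*s*(a+b) * Nat.choose (s+a) s * Nat.choose (s+b) s := by ring

lemma count_split (n0 n1 t : ℕ) (h : 0 < n0 + n1) :
    ((Bseq n0 n1).filter (fun x => tau x = t)).card
      = cnt (n0+n1) n0 n1 t false + cnt (n0+n1) n0 n1 t true := by
  unfold Bseq cnt
  rw [Finset.filter_filter]
  rw [← Finset.card_filter_add_card_filter_not
    (p := fun x : Fin (n0+n1) → Bool => x ⟨0, h⟩ = false),
    Finset.filter_filter, Finset.filter_filter]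
  congr 1
  · congr 1
    apply Finset.filter_congr
    intro x _
    constructor
    · rintro ⟨⟨⟨a, b⟩, c⟩, d⟩
      exact ⟨a, b, c, fun _ => d⟩
    · rintro ⟨a, b, c, d⟩
      exact ⟨⟨⟨a, b⟩, c⟩, d h⟩
  · congr 1
    apply Finset.filter_congr
    intro x _
    constructor
    · rintro ⟨⟨⟨a, b⟩, c⟩, d⟩
      refine ⟨a, b, c, fun _ => ?_⟩
      cases hb : x ⟨0, h⟩
      · exact absurd hb d
      · rfl
    · rintro ⟨a, b, c, d⟩
      refine ⟨⟨⟨a, b⟩, c⟩, ?_⟩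
      rw [d h]
      simp

theorem stmt_1 (n0 n1 t : ℕ) (h0 : 1 ≤ n0) (h1 : 1 ≤ n1) (ht : Even t) (ht2 : 2 ≤ t) :
    2 * n0 * n1 * ((Bseq n0 n1).filter (fun x => tau x = t)).card =
      ((n0 + n1) * t - t ^ 2) * Nat.choose n0 (t / 2) * Nat.choose n1 (t / 2) := by
  obtain ⟨s, hs⟩ : ∃ s, t = 2 * s := by
    obtain ⟨u, hu⟩ := ht
    exact ⟨u, by omega⟩
  have hs1 : 1 ≤ s := by omega
  rw [count_split n0 n1 t (by omega)]
  rw [master, cnt_symm (n0+n1) n0 n1 t true]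
  simp only [Bool.not_true]
  rw [master]
  rw [if_pos (by omega : n1 + n0 = n0 + n1)]
  simp only [if_true]
  unfold f0
  rw [if_neg (by omega), if_neg (by omega), if_neg (by omega), if_neg (by omega)]
  have e1 : t / 2 = s := by omega
  have e2 : (t - 1) / 2 = s - 1 := by omega
  rw [e1, e2]
  have := arith n0 n1 s h0 h1 hs1
  rw [hs]
  exact this
end

section
/- Let m ≥ 1 be a natural number and let X be sampled uniformly at random from B_{m,m}. Then the variance of τ(X) equals m(m − 1)/(2m − 1). -/
open MeasureTheory ProbabilityTheory

lemma integral_uniformOn {α : Type*} [Fintype α] [MeasurableSpace α]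
    [MeasurableSingletonClass α] (s : Finset α) (f : α → ℝ) :
    ∫ x, f x ∂(uniformOn (↑s : Set α)) = (∑ x ∈ s, f x) / s.card := by
  classical
  have hμ : ∀ x : α, ((uniformOn (↑s : Set α)) {x}).toReal
      = if x ∈ s then ((s.card : ℝ))⁻¹ else 0 := by
    intro x
    rw [uniformOn, ProbabilityTheory.cond_apply s.measurableSet]
    have hc : Measure.count (↑s : Set α) = s.card := Measure.count_apply_finset s
    rw [hc]
    by_cases hx : x ∈ s
    · have h1 : (↑s ∩ {x} : Set α) = {x} := by
        ext y
        constructor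
        · rintro ⟨_, rfl⟩; rfl
        · rintro rfl; exact ⟨hx, rfl⟩
      rw [h1, Measure.count_singleton, if_pos hx, mul_one, ENNReal.toReal_inv,
        ENNReal.toReal_natCast]
    · have h1 : (↑s ∩ {x} : Set α) = ∅ := by
        ext y
        simp only [Set.mem_inter_iff, Set.mem_singleton_iff, Set.mem_empty_iff_false, iff_false,
          not_and, Finset.mem_coe]
        rintro h rfl; exact hx h
      rw [h1, measure_empty, if_neg hx, mul_zero, ENNReal.toReal_zero]
  rw [integral_fintype (Integrable.of_finite)]
  have : ∀ x : α, ((uniformOn (↑s : Set α)) {x}).toReal • f x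
      = if x ∈ s then (s.card : ℝ)⁻¹ * f x else 0 := by
    intro x; rw [hμ x]; by_cases hx : x ∈ s <;> simp [hx]
  simp_rw [measureReal_def, this]
  rw [Finset.sum_ite_mem, Finset.univ_inter, ← Finset.mul_sum, div_eq_mul_inv, mul_comm]

lemma mem_Bseq {m : ℕ} {x : Fin (m + m) → Bool} :
    x ∈ Bseq m m ↔ (Finset.univ.filter (fun i => x i = true)).card = m := by
  classical
  constructor
  · rintro hx
    rw [Bseq, Finset.mem_filter] at hx
    exact hx.2.2
  · intro h
    rw [Bseq, Finset.mem_filter]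
    refine ⟨Finset.mem_univ _, ?_, h⟩
    have hsum := Finset.card_filter_add_card_filter_not
      (s := (Finset.univ : Finset (Fin (m+m)))) (p := fun i => x i = true)
    simp only [Finset.card_univ, Fintype.card_fin] at hsum
    have : (Finset.univ.filter (fun i => ¬ x i = true)) =
        (Finset.univ.filter (fun i => x i = false)) := by
      apply Finset.filter_congr; intro i _; simp
    rw [this, h] at hsum
    omega

lemma count_agree (m : ℕ) (S : Finset (Fin (m + m))) (p : Fin (m + m) → Bool)
    (h1 : (S.filter (fun i => p i = true)).card ≤ m) :
    ((Bseq m m).filter (fun x => ∀ i ∈ S, x i = p i)).card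
      = Nat.choose (m + m - S.card) (m - (S.filter (fun i => p i = true)).card) := by
  classical
  set k1 := (S.filter (fun i => p i = true)).card with hk1
  have key : ((Bseq m m).filter (fun x => ∀ i ∈ S, x i = p i)).card
      = (Finset.powersetCard (m - k1) (Finset.univ \ S)).card := by
    apply Finset.card_bij'
      (i := fun x _ => (Finset.univ \ S).filter (fun i => x i = true))
      (j := fun U _ => fun i => if i ∈ S then p i else decide (i ∈ U))
    · -- hi : maps into powersetCard
      intro x hx
      rw [Finset.mem_filter] at hx
      obtain ⟨hxB, hagree⟩ := hx
      rw [Finset.mem_powersetCard]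
      refine ⟨Finset.filter_subset _ _, ?_⟩
      have hsplit : (Finset.univ.filter (fun i => x i = true))
          = (S.filter (fun i => x i = true)) ∪ ((Finset.univ \ S).filter (fun i => x i = true)) := by
        rw [← Finset.filter_union, Finset.union_sdiff_of_subset (Finset.subset_univ S)]
      have hdisj : Disjoint (S.filter (fun i => x i = true))
          ((Finset.univ \ S).filter (fun i => x i = true)) :=
        Finset.disjoint_filter_filter (Finset.disjoint_sdiff)
      have hcardsplit := (mem_Bseq.mp hxB)
      rw [hsplit, Finset.card_union_of_disjoint hdisj] at hcardsplit
      have hSeq : (S.filter (fun i => x i = true)) = (S.filter (fun i => p i = true)) := by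
        apply Finset.filter_congr; intro i hi; rw [hagree i hi]
      rw [hSeq] at hcardsplit
      omega
    · -- hj : maps back into source
      intro U hU
      rw [Finset.mem_powersetCard] at hU
      obtain ⟨hUsub, hUcard⟩ := hU
      rw [Finset.mem_filter]
      constructor
      · rw [mem_Bseq]
        have hsplit : (Finset.univ.filter (fun i => (if i ∈ S then p i else decide (i ∈ U)) = true))
            = (S.filter (fun i => (if i ∈ S then p i else decide (i ∈ U)) = true))
              ∪ ((Finset.univ \ S).filter (fun i => (if i ∈ S then p i else decide (i ∈ U)) = true)) := by
          rw [← Finset.filter_union, Finset.union_sdiff_of_subset (Finset.subset_univ S)]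
        rw [hsplit, Finset.card_union_of_disjoint
          (Finset.disjoint_filter_filter (Finset.disjoint_sdiff))]
        have e1 : (S.filter (fun i => (if i ∈ S then p i else decide (i ∈ U)) = true))
            = S.filter (fun i => p i = true) := by
          apply Finset.filter_congr; intro i hi; rw [if_pos hi]
        have e2 : ((Finset.univ \ S).filter (fun i => (if i ∈ S then p i else decide (i ∈ U)) = true)) = U := by
          ext i
          rw [Finset.mem_filter, Finset.mem_sdiff]
          constructor
          · rintro ⟨⟨-, hiS⟩, hval⟩
            rw [if_neg hiS] at hval
            exact of_decide_eq_true hval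
          · intro hiU
            have hiS : i ∉ S := fun h => (Finset.mem_sdiff.mp (hUsub hiU)).2 h
            exact ⟨Finset.mem_sdiff.mp (hUsub hiU), by rw [if_neg hiS, decide_eq_true_eq]; exact hiU⟩
        rw [e1, e2, hUcard, ← hk1]
        omega
      · intro i hi
        simp only [if_pos hi]
    · -- left inverse
      intro x hx
      rw [Finset.mem_filter] at hx
      funext i
      by_cases hiS : i ∈ S
      · rw [if_pos hiS, hx.2 i hiS]
      · rw [if_neg hiS]
        by_cases hxi : x i = true
        · rw [hxi]; simp [Finset.mem_filter, hiS, hxi]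
        · simp only [Bool.not_eq_true] at hxi
          rw [hxi]; simp [Finset.mem_filter, hiS, hxi]
    · -- right inverse
      intro U hU
      rw [Finset.mem_powersetCard] at hU
      ext i
      rw [Finset.mem_filter, Finset.mem_sdiff]
      constructor
      · rintro ⟨⟨-, hiS⟩, hval⟩
        simp only [if_neg hiS, decide_eq_true_eq] at hval
        exact hval
      · intro hiU
        have hiS : i ∉ S := fun h => (Finset.mem_sdiff.mp (hU.1 hiU)).2 h
        exact ⟨Finset.mem_sdiff.mp (hU.1 hiU), by simp only [if_neg hiS, decide_eq_true_eq]; exact hiU⟩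
  rw [key, Finset.card_powersetCard, Finset.card_sdiff_of_subset (Finset.subset_univ S),
    Finset.card_univ, Fintype.card_fin]

lemma count_pattern2 (m : ℕ) (hm : 1 ≤ m) {i j : Fin (m + m)} (hij : i ≠ j) (a : Bool) :
    ((Bseq m m).filter fun x => x i = a ∧ x j = !a).card
      = Nat.choose (m + m - 2) (m - 1) := by
  classical
  have h1 : ((insert i ({j} : Finset _)).filter
      (fun t => (if t = i then a else !a) = true)).card ≤ m := by
    cases a <;>
      simp [Finset.filter_insert, Finset.filter_singleton, Ne.symm hij, hm]
  have key := count_agree m (insert i {j}) (fun t => if t = i then a else !a) h1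
  have hpred : ((Bseq m m).filter (fun x => ∀ t ∈ insert i ({j} : Finset _),
      x t = (fun t => if t = i then a else !a) t))
      = ((Bseq m m).filter fun x => x i = a ∧ x j = !a) := by
    apply Finset.filter_congr
    intro x _
    simp [Finset.forall_mem_insert, Ne.symm hij]
  rw [hpred] at key
  rw [key]
  have hcard : (insert i ({j} : Finset _)).card = 2 := by
    rw [Finset.card_insert_of_notMem (by simp [hij]), Finset.card_singleton]
  have hk1 : ((insert i ({j} : Finset _)).filter
      (fun t => (if t = i then a else !a) = true)).card = 1 := by
    cases a <;>
      simp [Finset.filter_insert, Finset.filter_singleton, Ne.symm hij]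
  rw [hcard, hk1]

lemma count_pattern3 (m : ℕ) (hm : 2 ≤ m) {i j k : Fin (m + m)}
    (hij : i ≠ j) (hik : i ≠ k) (hjk : j ≠ k) (a : Bool) :
    ((Bseq m m).filter fun x => x i = a ∧ x j = !a ∧ x k = a).card
      = Nat.choose (m + m - 3) (m - (if a then 2 else 1)) := by
  classical
  have h1 : ((insert i (insert j ({k} : Finset _))).filter
      (fun t => (if t = i then a else if t = j then !a else a) = true)).card ≤ m := by
    cases a <;>
      simp [Finset.filter_insert, Finset.filter_singleton, Ne.symm hij, Ne.symm hik,
        Ne.symm hjk, Finset.card_insert_of_notMem, Finset.card_pair hik] <;> omega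
  have key := count_agree m (insert i (insert j {k}))
    (fun t => if t = i then a else if t = j then !a else a) h1
  have hpred : ((Bseq m m).filter (fun x => ∀ t ∈ insert i (insert j ({k} : Finset _)),
      x t = (fun t => if t = i then a else if t = j then !a else a) t))
      = ((Bseq m m).filter fun x => x i = a ∧ x j = !a ∧ x k = a) := by
    apply Finset.filter_congr
    intro x _
    simp [Finset.forall_mem_insert, Ne.symm hij, Ne.symm hik, Ne.symm hjk]
  rw [hpred] at key
  rw [key]
  have hcard : (insert i (insert j ({k} : Finset _))).card = 3 := by
    rw [Finset.card_insert_of_notMem (by simp [hij, hik]),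
      Finset.card_insert_of_notMem (by simp [hjk]), Finset.card_singleton]
  have hk1 : ((insert i (insert j ({k} : Finset _))).filter
      (fun t => (if t = i then a else if t = j then !a else a) = true)).card
      = (if a then 2 else 1) := by
    cases a <;>
      simp [Finset.filter_insert, Finset.filter_singleton, Ne.symm hij, Ne.symm hik,
        Ne.symm hjk, Finset.card_insert_of_notMem, Finset.card_pair hik]
  rw [hcard, hk1]

lemma count_pattern4 (m : ℕ) (hm : 2 ≤ m) {i j k l : Fin (m + m)}
    (hij : i ≠ j) (hik : i ≠ k) (hil : i ≠ l) (hjk : j ≠ k) (hjl : j ≠ l) (hkl : k ≠ l)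
    (a b : Bool) :
    ((Bseq m m).filter fun x => (x i = a ∧ x j = !a) ∧ x k = b ∧ x l = !b).card
      = Nat.choose (m + m - 4) (m - 2) := by
  classical
  have h1 : ((insert i (insert j (insert k ({l} : Finset _)))).filter
      (fun t => (if t = i then a else if t = j then !a else if t = k then b else !b) = true)).card
      ≤ m := by
    cases a <;> cases b <;>
      simp [Finset.filter_insert, Finset.filter_singleton, Ne.symm hij, Ne.symm hik,
        Ne.symm hil, Ne.symm hjk, Ne.symm hjl, Ne.symm hkl, Finset.card_insert_of_notMem,
        Finset.card_pair hik, Finset.card_pair hil, Finset.card_pair hjk,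
        Finset.card_pair hjl] <;> omega
  have key := count_agree m (insert i (insert j (insert k {l})))
    (fun t => if t = i then a else if t = j then !a else if t = k then b else !b) h1
  have hpred : ((Bseq m m).filter (fun x => ∀ t ∈ insert i (insert j (insert k ({l} : Finset _))),
      x t = (fun t => if t = i then a else if t = j then !a else if t = k then b else !b) t))
      = ((Bseq m m).filter fun x => (x i = a ∧ x j = !a) ∧ x k = b ∧ x l = !b) := by
    apply Finset.filter_congr
    intro x _
    simp [Finset.forall_mem_insert, Ne.symm hij, Ne.symm hik, Ne.symm hil, Ne.symm hjk,
      Ne.symm hjl, Ne.symm hkl]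
    tauto
  rw [hpred] at key
  rw [key]
  have hcard : (insert i (insert j (insert k ({l} : Finset _)))).card = 4 := by
    rw [Finset.card_insert_of_notMem (by simp [hij, hik, hil]),
      Finset.card_insert_of_notMem (by simp [hjk, hjl]),
      Finset.card_insert_of_notMem (by simp [hkl]), Finset.card_singleton]
  have hk1 : ((insert i (insert j (insert k ({l} : Finset _)))).filter
      (fun t => (if t = i then a else if t = j then !a else if t = k then b else !b) = true)).card
      = 2 := by
    cases a <;> cases b <;>
      simp [Finset.filter_insert, Finset.filter_singleton, Ne.symm hij, Ne.symm hik,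
        Ne.symm hil, Ne.symm hjk, Ne.symm hjl, Ne.symm hkl, Finset.card_insert_of_notMem,
        Finset.card_pair hik, Finset.card_pair hil, Finset.card_pair hjk, Finset.card_pair hjl]
  rw [hcard, hk1]

lemma card_filter_bool_split {α : Type*} [DecidableEq α] (s : Finset α) (P : α → Prop)
    [DecidablePred P] (g : α → Bool) :
    (s.filter P).card = (s.filter fun x => P x ∧ g x = true).card
      + (s.filter fun x => P x ∧ g x = false).card := by
  classical
  have h := Finset.card_filter_add_card_filter_not
    (s := s.filter P) (p := fun x => g x = true)
  rw [Finset.filter_filter, Finset.filter_filter] at h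
  have e : (s.filter fun x => P x ∧ ¬ g x = true) = (s.filter fun x => P x ∧ g x = false) := by
    apply Finset.filter_congr; intro x _; simp
  rw [e] at h
  omega

/-- The jump predicate, as in `tau`. -/
def Jp (m : ℕ) (i : Fin (m + m)) (x : Fin (m + m) → Bool) : Prop :=
  ∃ h : (i : ℕ) + 1 < m + m, x i ≠ x ⟨(i : ℕ) + 1, h⟩

instance (m : ℕ) (i : Fin (m+m)) : DecidablePred (Jp m i) := by
  intro x; unfold Jp; infer_instance

lemma caseA (m : ℕ) (hm : 1 ≤ m) {i : Fin (m + m)} (hi : (i : ℕ) + 1 < m + m) :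
    ((Bseq m m).filter (Jp m i)).card = 2 * Nat.choose (m + m - 2) (m - 1) := by
  classical
  set i' : Fin (m + m) := ⟨(i : ℕ) + 1, hi⟩ with hi'
  have hii' : i ≠ i' := by simp [Fin.ext_iff, hi']
  have hpred : (Bseq m m).filter (Jp m i) = (Bseq m m).filter (fun x => x i ≠ x i') := by
    apply Finset.filter_congr; intro x _
    exact ⟨fun ⟨h, hx⟩ => hx, fun hx => ⟨hi, hx⟩⟩
  rw [hpred, card_filter_bool_split (Bseq m m) _ (fun x => x i)]
  have e1 : ((Bseq m m).filter fun x => x i ≠ x i' ∧ x i = true)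
      = ((Bseq m m).filter fun x => x i = true ∧ x i' = !true) := by
    apply Finset.filter_congr; intro x _
    cases hxi : x i <;> cases hxi' : x i' <;> simp [hxi, hxi']
  have e2 : ((Bseq m m).filter fun x => x i ≠ x i' ∧ x i = false)
      = ((Bseq m m).filter fun x => x i = false ∧ x i' = !false) := by
    apply Finset.filter_congr; intro x _
    cases hxi : x i <;> cases hxi' : x i' <;> simp [hxi, hxi']
  rw [e1, e2, count_pattern2 m hm hii' true, count_pattern2 m hm hii' false]
  ring

lemma caseAdj (m : ℕ) {i j : Fin (m + m)} (hi : (i : ℕ) + 1 < m + m)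
    (hj : (j : ℕ) + 1 < m + m) (hadj : (j : ℕ) = (i : ℕ) + 1) :
    ((Bseq m m).filter (fun x => Jp m i x ∧ Jp m j x)).card
      = Nat.choose (m + m - 2) (m - 1) := by
  classical
  have hm : 2 ≤ m := by omega
  set j' : Fin (m + m) := ⟨(j : ℕ) + 1, hj⟩ with hj'
  have hij : i ≠ j := by simp [Fin.ext_iff]; omega
  have hij' : i ≠ j' := by simp [Fin.ext_iff, hj']; omega
  have hjj' : j ≠ j' := by simp [Fin.ext_iff, hj']
  have hpred : (Bseq m m).filter (fun x => Jp m i x ∧ Jp m j x)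
      = (Bseq m m).filter (fun x => x i ≠ x j ∧ x j ≠ x j') := by
    apply Finset.filter_congr; intro x _
    constructor
    · rintro ⟨⟨h1, hx1⟩, ⟨h2, hx2⟩⟩
      constructor
      · convert hx1 using 2
        simp [Fin.ext_iff, hadj]
      · exact hx2
    · rintro ⟨hx1, hx2⟩
      refine ⟨⟨hi, ?_⟩, ⟨hj, hx2⟩⟩
      convert hx1 using 2
      simp [Fin.ext_iff, hadj]
  rw [hpred, card_filter_bool_split (Bseq m m) _ (fun x => x j)]
  have e1 : ((Bseq m m).filter fun x => (x i ≠ x j ∧ x j ≠ x j') ∧ x j = true)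
      = ((Bseq m m).filter fun x => x i = false ∧ x j = !false ∧ x j' = false) := by
    apply Finset.filter_congr; intro x _
    cases hxi : x i <;> cases hxj : x j <;> cases hxj' : x j' <;> simp [hxi, hxj, hxj']
  have e2 : ((Bseq m m).filter fun x => (x i ≠ x j ∧ x j ≠ x j') ∧ x j = false)
      = ((Bseq m m).filter fun x => x i = true ∧ x j = !true ∧ x j' = true) := by
    apply Finset.filter_congr; intro x _
    cases hxi : x i <;> cases hxj : x j <;> cases hxj' : x j' <;> simp [hxi, hxj, hxj']
  rw [e1, e2, count_pattern3 m hm hij hij' hjj' false, count_pattern3 m hm hij hij' hjj' true]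
  obtain ⟨k, rfl⟩ : ∃ k, m = k + 2 := ⟨m - 2, by omega⟩
  have h1 : k + 2 + (k + 2) - 3 = 2 * k + 1 := by omega
  have h2 : k + 2 + (k + 2) - 2 = 2 * k + 2 := by omega
  have h3 : k + 2 - 2 = k := by omega
  have h4 : k + 2 - 1 = k + 1 := by omega
  rw [h1, h2]
  norm_num [h3, h4]
  have hp : (2 * k + 2).choose (k + 1) = (2 * k + 1).choose k + (2 * k + 1).choose (k + 1) :=
    Nat.choose_succ_succ (2 * k + 1) k
  omega

lemma caseFar (m : ℕ) {i j : Fin (m + m)} (hi : (i : ℕ) + 1 < m + m)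
    (hj : (j : ℕ) + 1 < m + m) (h1 : (j : ℕ) ≠ (i : ℕ) + 1) (h2 : (i : ℕ) ≠ (j : ℕ) + 1)
    (hij : i ≠ j) :
    ((Bseq m m).filter (fun x => Jp m i x ∧ Jp m j x)).card
      = 4 * Nat.choose (m + m - 4) (m - 2) := by
  classical
  have hivj : (i : ℕ) ≠ (j : ℕ) := fun h => hij (Fin.ext h)
  have hm : 2 ≤ m := by omega
  set i' : Fin (m + m) := ⟨(i : ℕ) + 1, hi⟩ with hi'
  set j' : Fin (m + m) := ⟨(j : ℕ) + 1, hj⟩ with hj'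
  have d1 : i ≠ i' := by simp [Fin.ext_iff, hi']
  have d2 : i ≠ j' := by simp [Fin.ext_iff, hj']; omega
  have d3 : i' ≠ j := by simp [Fin.ext_iff, hi']; omega
  have d4 : i' ≠ j' := by simp [Fin.ext_iff, hi', hj']; omega
  have d5 : j ≠ j' := by simp [Fin.ext_iff, hj']
  have hpred : (Bseq m m).filter (fun x => Jp m i x ∧ Jp m j x)
      = (Bseq m m).filter (fun x => x i ≠ x i' ∧ x j ≠ x j') := by
    apply Finset.filter_congr; intro x _
    exact ⟨fun ⟨⟨ha, hxa⟩, ⟨hb, hxb⟩⟩ => ⟨hxa, hxb⟩, fun ⟨hxa, hxb⟩ => ⟨⟨hi, hxa⟩, ⟨hj, hxb⟩⟩⟩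
  rw [hpred, card_filter_bool_split (Bseq m m) _ (fun x => x i)]
  have split2 : ∀ (a : Bool),
      ((Bseq m m).filter fun x => (x i ≠ x i' ∧ x j ≠ x j') ∧ x i = a).card
      = ((Bseq m m).filter fun x => (x i = a ∧ x i' = !a) ∧ x j = true ∧ x j' = !true).card
        + ((Bseq m m).filter fun x => (x i = a ∧ x i' = !a) ∧ x j = false ∧ x j' = !false).card := by
    intro a
    rw [card_filter_bool_split (Bseq m m) _ (fun x => x j)]
    have eT : ((Bseq m m).filter fun x => ((x i ≠ x i' ∧ x j ≠ x j') ∧ x i = a) ∧ x j = true)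
        = ((Bseq m m).filter fun x => (x i = a ∧ x i' = !a) ∧ x j = true ∧ x j' = !true) := by
      apply Finset.filter_congr; intro x _
      cases a <;> cases hxi : x i <;> cases hxi' : x i' <;> cases hxj : x j <;>
        cases hxj' : x j' <;> simp [hxi, hxi', hxj, hxj']
    have eF : ((Bseq m m).filter fun x => ((x i ≠ x i' ∧ x j ≠ x j') ∧ x i = a) ∧ x j = false)
        = ((Bseq m m).filter fun x => (x i = a ∧ x i' = !a) ∧ x j = false ∧ x j' = !false) := by
      apply Finset.filter_congr; intro x _
      cases a <;> cases hxi : x i <;> cases hxi' : x i' <;> cases hxj : x j <;>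
        cases hxj' : x j' <;> simp [hxi, hxi', hxj, hxj']
    rw [eT, eF]
  rw [split2 true, split2 false,
    count_pattern4 m hm d1 hij d2 d3 d4 d5 true true,
    count_pattern4 m hm d1 hij d2 d3 d4 d5 true false,
    count_pattern4 m hm d1 hij d2 d3 d4 d5 false true,
    count_pattern4 m hm d1 hij d2 d3 d4 d5 false false]
  ring

lemma card_filter_fin_lt (n t : ℕ) :
    ((Finset.univ : Finset (Fin n)).filter fun i : Fin n => (i : ℕ) + t < n).card = n - t := by
  rw [Finset.card_filter]
  rw [Fin.sum_univ_eq_sum_range (fun i => if i + t < n then 1 else 0)]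
  rw [← Finset.card_filter]
  have h : (Finset.range n).filter (fun i => i + t < n) = Finset.range (n - t) := by
    ext a; simp only [Finset.mem_filter, Finset.mem_range]; omega
  rw [h, Finset.card_range]

section Sums
variable (m : ℕ)

/-- index set of possible jump positions -/
def Jset (m : ℕ) : Finset (Fin (m + m)) :=
  Finset.univ.filter fun i => (i : ℕ) + 1 < m + m

lemma mem_Jset {m : ℕ} {i : Fin (m + m)} : i ∈ Jset m ↔ (i : ℕ) + 1 < m + m := by
  simp [Jset]

lemma Jset_card (m : ℕ) : (Jset m).card = m + m - 1 := card_filter_fin_lt (m + m) 1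

lemma tau_eq_sum (m : ℕ) (x : Fin (m + m) → Bool) :
    (tau x : ℝ) = ∑ i ∈ Jset m, (if Jp m i x then (1 : ℝ) else 0) := by
  have h0 : tau x = ∑ i ∈ Jset m, (if Jp m i x then 1 else 0) := by
    rw [show tau x = (Finset.univ.filter (fun i => Jp m i x)).card from rfl,
      Finset.card_filter]
    refine (Finset.sum_subset (Finset.filter_subset _ _) ?_).symm
    intro i _ hiJ
    rw [if_neg]
    rintro ⟨h, -⟩
    exact hiJ (mem_Jset.mpr h)
  rw [h0]
  push_cast
  rfl

lemma sum_tau (m : ℕ) (hm : 1 ≤ m) :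
    ∑ x ∈ Bseq m m, (tau x : ℝ)
      = ((m + m - 1 : ℕ) : ℝ) * (2 * (Nat.choose (m + m - 2) (m - 1) : ℝ)) := by
  simp_rw [tau_eq_sum m]
  rw [Finset.sum_comm]
  have hconst : ∀ i ∈ Jset m, (∑ x ∈ Bseq m m, if Jp m i x then (1 : ℝ) else 0)
      = 2 * (Nat.choose (m + m - 2) (m - 1) : ℝ) := by
    intro i hi
    rw [Finset.sum_boole]
    rw [caseA m hm (mem_Jset.mp hi)]
    push_cast
    ring
  rw [Finset.sum_congr rfl hconst, Finset.sum_const, Jset_card, nsmul_eq_mul]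

lemma pointwise_pair (m : ℕ) (hm : 1 ≤ m) {i j : Fin (m + m)}
    (hi : i ∈ Jset m) (hj : j ∈ Jset m) :
    (((Bseq m m).filter (fun x => Jp m i x ∧ Jp m j x)).card : ℝ)
      = 4 * (Nat.choose (m + m - 4) (m - 2) : ℝ)
        + (if i = j then 2 * (Nat.choose (m + m - 2) (m - 1) : ℝ)
            - 4 * (Nat.choose (m + m - 4) (m - 2) : ℝ) else 0)
        + (if (j : ℕ) = (i : ℕ) + 1 ∨ (i : ℕ) = (j : ℕ) + 1
            then (Nat.choose (m + m - 2) (m - 1) : ℝ)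
              - 4 * (Nat.choose (m + m - 4) (m - 2) : ℝ) else 0) := by
  rw [mem_Jset] at hi hj
  by_cases heq : i = j
  · subst heq
    rw [if_pos rfl, if_neg (show ¬ ((i : ℕ) = (i : ℕ) + 1 ∨ (i : ℕ) = (i : ℕ) + 1) by omega)]
    have e : ((Bseq m m).filter (fun x => Jp m i x ∧ Jp m i x)) = (Bseq m m).filter (Jp m i) := by
      apply Finset.filter_congr; intro x _; tauto
    rw [e, caseA m hm hi]
    push_cast; ring
  · rw [if_neg heq]
    have hivj : (i : ℕ) ≠ (j : ℕ) := fun h => heq (Fin.ext h)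
    by_cases hadj : (j : ℕ) = (i : ℕ) + 1 ∨ (i : ℕ) = (j : ℕ) + 1
    · rw [if_pos hadj]
      rcases hadj with h | h
      · rw [caseAdj m hi hj h]; ring
      · have e : ((Bseq m m).filter (fun x => Jp m i x ∧ Jp m j x))
            = ((Bseq m m).filter (fun x => Jp m j x ∧ Jp m i x)) := by
          apply Finset.filter_congr; intro x _; tauto
        rw [e, caseAdj m hj hi h]; ring
    · rw [if_neg hadj]
      push_neg at hadj
      rw [caseFar m hi hj hadj.1 hadj.2 heq]
      push_cast; ring

lemma count_adj_pairs (m : ℕ) :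
    ∑ i ∈ Jset m, ∑ j ∈ Jset m, (if (j : ℕ) = (i : ℕ) + 1 then (1 : ℝ) else 0)
      = ((m + m - 2 : ℕ) : ℝ) := by
  have hinner : ∀ i ∈ Jset m, (∑ j ∈ Jset m, if (j : ℕ) = (i : ℕ) + 1 then (1 : ℝ) else 0)
      = if (i : ℕ) + 2 < m + m then (1 : ℝ) else 0 := by
    intro i hi
    rw [mem_Jset] at hi
    rw [Finset.sum_boole]
    by_cases h : (i : ℕ) + 2 < m + m
    · rw [if_pos h]
      have : (Jset m).filter (fun j : Fin (m+m) => (j : ℕ) = (i : ℕ) + 1) = {⟨(i : ℕ) + 1, by omega⟩} := by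
        ext j
        simp only [Finset.mem_filter, mem_Jset, Finset.mem_singleton, Fin.ext_iff]
        omega
      rw [this, Finset.card_singleton]; norm_num
    · rw [if_neg h]
      have : (Jset m).filter (fun j : Fin (m+m) => (j : ℕ) = (i : ℕ) + 1) = ∅ := by
        ext j
        simp only [Finset.mem_filter, mem_Jset, Finset.notMem_empty, iff_false, not_and]
        omega
      rw [this, Finset.card_empty]; norm_num
  rw [Finset.sum_congr rfl hinner]
  have e : ∀ i ∈ Jset m, (if (i : ℕ) + 2 < m + m then (1:ℝ) else 0)
      = if ((i : ℕ) + 1 < m + m ∧ (i : ℕ) + 2 < m + m) then (1:ℝ) else 0 := by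
    intro i hi
    rw [mem_Jset] at hi
    by_cases h : (i : ℕ) + 2 < m + m
    · rw [if_pos h, if_pos ⟨hi, h⟩]
    · rw [if_neg h, if_neg (fun hh => h hh.2)]
  rw [Finset.sum_congr rfl e]
  rw [Jset, Finset.sum_filter]
  have e2 : ∀ i ∈ (Finset.univ : Finset (Fin (m+m))),
      (if (i : ℕ) + 1 < m + m then
          if ((i : ℕ) + 1 < m + m ∧ (i : ℕ) + 2 < m + m) then (1:ℝ) else 0 else 0)
        = if (i : ℕ) + 2 < m + m then (1:ℝ) else 0 := by
    intro i _
    by_cases h : (i : ℕ) + 2 < m + m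
    · rw [if_pos h, if_pos (by omega), if_pos (by omega)]
    · rw [if_neg h]
      by_cases h1 : (i : ℕ) + 1 < m + m
      · rw [if_pos h1, if_neg (fun hh => h hh.2)]
      · rw [if_neg h1]
  rw [Finset.sum_congr rfl e2, Finset.sum_boole, card_filter_fin_lt (m+m) 2]

lemma sum_tau_sq (m : ℕ) (hm : 1 ≤ m) :
    ∑ x ∈ Bseq m m, (tau x : ℝ) ^ 2
      = ((m + m - 1 : ℕ) : ℝ)^2 * (4 * (Nat.choose (m + m - 4) (m - 2) : ℝ))
        + ((m + m - 1 : ℕ) : ℝ) * (2 * (Nat.choose (m + m - 2) (m - 1) : ℝ)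
            - 4 * (Nat.choose (m + m - 4) (m - 2) : ℝ))
        + (2 * ((m + m - 2 : ℕ) : ℝ)) * ((Nat.choose (m + m - 2) (m - 1) : ℝ)
            - 4 * (Nat.choose (m + m - 4) (m - 2) : ℝ)) := by
  have step1 : ∀ x, (tau x : ℝ) ^ 2
      = ∑ i ∈ Jset m, ∑ j ∈ Jset m, (if Jp m i x ∧ Jp m j x then (1:ℝ) else 0) := by
    intro x
    rw [sq, tau_eq_sum m, Finset.sum_mul_sum]
    apply Finset.sum_congr rfl; intro i _
    apply Finset.sum_congr rfl; intro j _
    by_cases h1 : Jp m i x <;> by_cases h2 : Jp m j x <;> simp [h1, h2]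
  simp_rw [step1]
  rw [Finset.sum_comm]
  have swap2 : ∀ i ∈ Jset m,
      (∑ x ∈ Bseq m m, ∑ j ∈ Jset m, if Jp m i x ∧ Jp m j x then (1:ℝ) else 0)
      = ∑ j ∈ Jset m, (((Bseq m m).filter (fun x => Jp m i x ∧ Jp m j x)).card : ℝ) := by
    intro i _
    rw [Finset.sum_comm]
    apply Finset.sum_congr rfl; intro j _
    rw [Finset.sum_boole]
  rw [Finset.sum_congr rfl swap2]
  have point : ∀ i ∈ Jset m, ∀ j ∈ Jset m,
      (((Bseq m m).filter (fun x => Jp m i x ∧ Jp m j x)).card : ℝ)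
      = 4 * (Nat.choose (m + m - 4) (m - 2) : ℝ)
        + (if i = j then 2 * (Nat.choose (m + m - 2) (m - 1) : ℝ)
            - 4 * (Nat.choose (m + m - 4) (m - 2) : ℝ) else 0)
        + (if (j : ℕ) = (i : ℕ) + 1 then (Nat.choose (m + m - 2) (m - 1) : ℝ)
              - 4 * (Nat.choose (m + m - 4) (m - 2) : ℝ) else 0)
        + (if (i : ℕ) = (j : ℕ) + 1 then (Nat.choose (m + m - 2) (m - 1) : ℝ)
              - 4 * (Nat.choose (m + m - 4) (m - 2) : ℝ) else 0) := by
    intro i hi j hj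
    rw [pointwise_pair m hm hi hj]
    by_cases h1 : (j : ℕ) = (i : ℕ) + 1
    · rw [if_pos (Or.inl h1), if_pos h1,
        if_neg (show ¬ (i : ℕ) = (j : ℕ) + 1 by omega)]
      ring
    · by_cases h2 : (i : ℕ) = (j : ℕ) + 1
      · rw [if_pos (Or.inr h2), if_neg h1, if_pos h2]; ring
      · rw [if_neg (show ¬ ((j : ℕ) = (i : ℕ) + 1 ∨ (i : ℕ) = (j : ℕ) + 1) by tauto),
          if_neg h1, if_neg h2]
        ring
  rw [Finset.sum_congr rfl (fun i hi => Finset.sum_congr rfl (fun j hj => point i hi j hj))]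
  simp_rw [Finset.sum_add_distrib]
  rw [Finset.sum_const, Finset.sum_const, Jset_card]
  have hdiag : ∑ i ∈ Jset m, ∑ j ∈ Jset m,
      (if i = j then 2 * (Nat.choose (m + m - 2) (m - 1) : ℝ)
        - 4 * (Nat.choose (m + m - 4) (m - 2) : ℝ) else 0)
      = ((m + m - 1 : ℕ) : ℝ) * (2 * (Nat.choose (m + m - 2) (m - 1) : ℝ)
          - 4 * (Nat.choose (m + m - 4) (m - 2) : ℝ)) := by
    have : ∀ i ∈ Jset m, (∑ j ∈ Jset m,
        if i = j then 2 * (Nat.choose (m + m - 2) (m - 1) : ℝ)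
          - 4 * (Nat.choose (m + m - 4) (m - 2) : ℝ) else 0)
        = 2 * (Nat.choose (m + m - 2) (m - 1) : ℝ)
          - 4 * (Nat.choose (m + m - 4) (m - 2) : ℝ) := by
      intro i hi
      rw [Finset.sum_ite_eq (Jset m) i, if_pos hi]
    rw [Finset.sum_congr rfl this, Finset.sum_const, Jset_card, nsmul_eq_mul]
  have hadj1 : ∑ i ∈ Jset m, ∑ j ∈ Jset m,
      (if (j : ℕ) = (i : ℕ) + 1 then (Nat.choose (m + m - 2) (m - 1) : ℝ)
        - 4 * (Nat.choose (m + m - 4) (m - 2) : ℝ) else 0)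
      = ((m + m - 2 : ℕ) : ℝ) * ((Nat.choose (m + m - 2) (m - 1) : ℝ)
          - 4 * (Nat.choose (m + m - 4) (m - 2) : ℝ)) := by
    have e : ∀ i ∈ Jset m, ∀ j ∈ Jset m,
        (if (j : ℕ) = (i : ℕ) + 1 then (Nat.choose (m + m - 2) (m - 1) : ℝ)
          - 4 * (Nat.choose (m + m - 4) (m - 2) : ℝ) else 0)
        = ((Nat.choose (m + m - 2) (m - 1) : ℝ)
            - 4 * (Nat.choose (m + m - 4) (m - 2) : ℝ))
          * (if (j : ℕ) = (i : ℕ) + 1 then (1:ℝ) else 0) := by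
      intro i _ j _
      by_cases h : (j : ℕ) = (i : ℕ) + 1 <;> simp [h]
    rw [Finset.sum_congr rfl (fun i hi => Finset.sum_congr rfl (fun j hj => e i hi j hj))]
    simp_rw [← Finset.mul_sum]
    rw [count_adj_pairs m]
    ring
  have hadj2 : ∑ i ∈ Jset m, ∑ j ∈ Jset m,
      (if (i : ℕ) = (j : ℕ) + 1 then (Nat.choose (m + m - 2) (m - 1) : ℝ)
        - 4 * (Nat.choose (m + m - 4) (m - 2) : ℝ) else 0)
      = ((m + m - 2 : ℕ) : ℝ) * ((Nat.choose (m + m - 2) (m - 1) : ℝ)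
          - 4 * (Nat.choose (m + m - 4) (m - 2) : ℝ)) := by
    rw [Finset.sum_comm]
    have e : ∀ i ∈ Jset m, ∀ j ∈ Jset m,
        (if (i : ℕ) = (j : ℕ) + 1 then (Nat.choose (m + m - 2) (m - 1) : ℝ)
          - 4 * (Nat.choose (m + m - 4) (m - 2) : ℝ) else 0)
        = ((Nat.choose (m + m - 2) (m - 1) : ℝ)
            - 4 * (Nat.choose (m + m - 4) (m - 2) : ℝ))
          * (if (i : ℕ) = (j : ℕ) + 1 then (1:ℝ) else 0) := by
      intro i _ j _
      by_cases h : (i : ℕ) = (j : ℕ) + 1 <;> simp [h]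
    rw [Finset.sum_congr rfl (fun j hj => Finset.sum_congr rfl (fun i hi => e i hi j hj))]
    simp_rw [← Finset.mul_sum]
    rw [count_adj_pairs m]
    ring
  rw [hdiag, hadj1, hadj2, nsmul_eq_mul]
  ring
end Sums

lemma choose_id1 (k : ℕ) :
    (k + 1) * Nat.choose (2 * k + 2) (k + 1) = 2 * (2 * k + 1) * Nat.choose (2 * k) k := by
  have h1 : (2 * k + 2) * Nat.choose (2 * k + 1) k = Nat.choose (2 * k + 2) (k + 1) * (k + 1) :=
    Nat.add_one_mul_choose_eq (2 * k + 1) k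
  have h2 : (2 * k + 1) * Nat.choose (2 * k) k = Nat.choose (2 * k + 1) (k + 1) * (k + 1) :=
    Nat.add_one_mul_choose_eq (2 * k) k
  have h3 : Nat.choose (2 * k + 1) k = Nat.choose (2 * k + 1) (k + 1) := by
    have := Nat.choose_symm (show k + 1 ≤ 2 * k + 1 by omega)
    rwa [show 2 * k + 1 - (k + 1) = k from by omega] at this
  rw [h3] at h1
  apply Nat.eq_of_mul_eq_mul_left (Nat.succ_pos k)
  calc (k + 1) * ((k + 1) * Nat.choose (2 * k + 2) (k + 1))
      = (k + 1) * (Nat.choose (2 * k + 2) (k + 1) * (k + 1)) := by ring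
    _ = (k + 1) * ((2 * k + 2) * Nat.choose (2 * k + 1) (k + 1)) := by rw [← h1]
    _ = (2 * k + 2) * (Nat.choose (2 * k + 1) (k + 1) * (k + 1)) := by ring
    _ = (2 * k + 2) * ((2 * k + 1) * Nat.choose (2 * k) k) := by rw [← h2]
    _ = (k + 1) * (2 * (2 * k + 1) * Nat.choose (2 * k) k) := by ring

lemma choose_id1' (k : ℕ) :
    (k + 2) * Nat.choose (2 * k + 4) (k + 2) = 2 * (2 * k + 3) * Nat.choose (2 * k + 2) (k + 1) := by
  have := choose_id1 (k + 1)
  rw [show 2 * (k + 1) + 2 = 2 * k + 4 from by ring, show (k + 1) + 1 = k + 2 from by ring,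
    show 2 * (k + 1) + 1 = 2 * k + 3 from by ring, show 2 * (k + 1) = 2 * k + 2 from by ring]
    at this
  exact this

lemma choose_id3 (k : ℕ) :
    (k + 2) * (k + 1) * Nat.choose (2 * k + 4) (k + 2)
      = 4 * (2 * k + 3) * (2 * k + 1) * Nat.choose (2 * k) k := by
  calc (k + 2) * (k + 1) * Nat.choose (2 * k + 4) (k + 2)
      = (k + 1) * ((k + 2) * Nat.choose (2 * k + 4) (k + 2)) := by ring
    _ = (k + 1) * (2 * (2 * k + 3) * Nat.choose (2 * k + 2) (k + 1)) := by rw [choose_id1' k]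
    _ = 2 * (2 * k + 3) * ((k + 1) * Nat.choose (2 * k + 2) (k + 1)) := by ring
    _ = 2 * (2 * k + 3) * (2 * (2 * k + 1) * Nat.choose (2 * k) k) := by rw [choose_id1 k]
    _ = 4 * (2 * k + 3) * (2 * k + 1) * Nat.choose (2 * k) k := by ring


lemma Bseq_card (m : ℕ) : (Bseq m m).card = Nat.choose (m + m) m := by
  classical
  have h := count_agree m ∅ (fun _ => false) (by simp)
  simpa using h

theorem stmt_8 (m : ℕ) (hm : 1 ≤ m) :
    variance (fun x => (tau x : ℝ))
      (uniformOn (↑(Bseq m m) : Set (Fin (m + m) → Bool))) =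
      (m : ℝ) * ((m : ℝ) - 1) / (2 * (m : ℝ) - 1) := by
  classical
  have hBcard := Bseq_card m
  have hpos : 0 < Nat.choose (m + m) m := Nat.choose_pos (by omega)
  have hne : ((Bseq m m : Finset _) : Set (Fin (m+m) → Bool)).Nonempty := by
    rw [Finset.coe_nonempty]
    exact Finset.card_pos.mp (by omega)
  haveI hP : IsProbabilityMeasure (uniformOn (↑(Bseq m m) : Set (Fin (m+m) → Bool))) :=
    uniformOn_isProbabilityMeasure (Finset.finite_toSet _) hne
  rw [variance_eq_sub (MemLp.of_discrete)]
  rw [show ((fun x : Fin (m+m) → Bool => (tau x : ℝ)) ^ 2)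
      = fun x : Fin (m+m) → Bool => (tau x : ℝ) ^ 2 from by funext x; simp [Pi.pow_apply]]
  rw [integral_uniformOn (Bseq m m) (fun x => (tau x : ℝ) ^ 2),
    integral_uniformOn (Bseq m m) (fun x => (tau x : ℝ))]
  rw [sum_tau m hm, sum_tau_sq m hm, hBcard]
  rcases Nat.lt_or_ge m 2 with h2 | h2
  · have hm1 : m = 1 := by omega
    subst hm1
    norm_num [Nat.choose]
  · obtain ⟨k, rfl⟩ : ∃ k, m = k + 2 := ⟨m - 2, by omega⟩
    rw [show k + 2 + (k + 2) - 1 = 2 * k + 3 from by omega,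
      show k + 2 + (k + 2) - 2 = 2 * k + 2 from by omega,
      show k + 2 + (k + 2) - 4 = 2 * k from by omega,
      show k + 2 + (k + 2) = 2 * k + 4 from by omega,
      show k + 2 - 1 = k + 1 from by omega,
      show k + 2 - 2 = k from by omega]
    set N := Nat.choose (2 * k + 4) (k + 2) with hN
    set A := Nat.choose (2 * k + 2) (k + 1) with hA
    set Q := Nat.choose (2 * k) k with hQ
    have hN0 : (N : ℝ) ≠ 0 := by
      have : 0 < N := Nat.choose_pos (by omega)
      positivity
    have id1 : ((k : ℝ) + 2) * N = 2 * (2 * k + 3) * A := by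
      exact_mod_cast congrArg (Nat.cast : ℕ → ℝ) (choose_id1' k)
    have id3 : ((k : ℝ) + 2) * (k + 1) * N = 4 * (2 * k + 3) * (2 * k + 1) * Q := by
      exact_mod_cast congrArg (Nat.cast : ℕ → ℝ) (choose_id3 k)
    have h23 : (2 * (k:ℝ) + 3) ≠ 0 := by positivity
    have h21 : (2 * (k:ℝ) + 1) ≠ 0 := by positivity
    have hAr : (A : ℝ) = ((k : ℝ) + 2) * N / (2 * (2 * k + 3)) := by
      field_simp
      linarith [id1]
    have hQr : (Q : ℝ) = ((k : ℝ) + 2) * (k + 1) * N / (4 * (2 * k + 3) * (2 * k + 1)) := by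
      field_simp
      linarith [id3]
    push_cast
    rw [hAr, hQr]
    have h2k3 : 2 * ((k : ℝ) + 2) - 1 = 2 * k + 3 := by ring
    rw [h2k3]
    field_simp
    ring
end
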